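/- Let a, b be coprime positive integers with b ≥ 2, and let s(a,b) = ∑_{k=1}^{b−1} ((k/b))((ka/b)) be the classical Dedekind sum, where ((x)) = x − ⌊x⌋ − 1/2 for x ∉ ℤ and ((x)) = 0 for x ∈ ℤ. Then −(b−1)(b−2)/(12b) ≤ s(a,b) ≤ (b−1)(b−2)/(12b). Moreover, the upper bound holds if and only if a ≡ 1 (mod b), and the lower bound holds if and only if a ≡ −1 (mod b). -/

import Mathlib

/-- The sawtooth function `((x))`. -/
def saw (x : ℚ) : ℚ := if x.den = 1 then 0 else x - ⌊x⌋ - 1 / 2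

/-- The classical Dedekind sum `s(a,b) = ∑_{k=1}^{b−1} ((k/b))((ka/b))`. -/
def dedekindSum (a b : ℕ) : ℚ :=
  ∑ k ∈ Finset.Ico 1 b, saw ((k : ℚ) / b) * saw ((k * a : ℚ) / b)


lemma saw_div (m b : ℕ) (hb : 0 < b) (hmb : m % b ≠ 0) :
    saw ((m : ℚ) / b) = ((m % b : ℕ) : ℚ) / b - 1 / 2 := by
  have hb' : (b : ℚ) ≠ 0 := by positivity
  have hden : ((m : ℚ) / b).den ≠ 1 := by
    intro hd
    rw [Rat.den_eq_one_iff] at hd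
    apply hmb
    have : (m : ℚ) = ((m : ℚ)/b).num * b := by
      field_simp at hd ⊢; linarith [hd]
    have h2 : (m : ℤ) = ((m : ℚ)/b).num * b := by exact_mod_cast this
    have : (b : ℤ) ∣ (m : ℤ) := ⟨_, by linarith [h2, mul_comm (((m : ℚ)/b).num) (b:ℤ)]⟩
    have : b ∣ m := by exact_mod_cast this
    omega
  have hfloor : ⌊(m:ℚ)/b⌋ = ((m / b : ℕ) : ℤ) := by
    rw [Rat.floor_natCast_div_natCast]; exact_mod_cast rfl
  rw [saw, if_neg hden, hfloor]
  have key : (m:ℚ) = (b:ℚ) * ((m / b : ℕ):ℚ) + ((m % b : ℕ):ℚ) := by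
    exact_mod_cast (Nat.div_add_mod m b).symm
  rw [Int.cast_natCast]
  field_simp
  linarith [key]

lemma sum_id_range (n : ℕ) : ∑ k ∈ Finset.range n, (k:ℚ) = (n:ℚ)*((n:ℚ)-1)/2 := by
  induction n with
  | zero => simp
  | succ n ih => rw [Finset.sum_range_succ, ih]; push_cast; ring

lemma sum_sq_range (n : ℕ) :
    ∑ k ∈ Finset.range n, (k:ℚ)^2 = (n:ℚ)*((n:ℚ)-1)*(2*(n:ℚ)-1)/6 := by
  induction n with
  | zero => simp
  | succ n ih => rw [Finset.sum_range_succ, ih]; push_cast; ring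

lemma S1_val (b : ℕ) (hb : 2 ≤ b) :
    ∑ k ∈ Finset.Ico 1 b, ((k:ℚ)/b - 1/2)^2 = ((b:ℚ)-1)*((b:ℚ)-2)/(12*b) := by
  have hb' : (b : ℚ) ≠ 0 := by positivity
  have h0 : ∑ k ∈ Finset.range b, ((k:ℚ)/b - 1/2)^2
      = ((0:ℚ)/b - 1/2)^2 + ∑ k ∈ Finset.Ico 1 b, ((k:ℚ)/b - 1/2)^2 := by
    rw [Finset.range_eq_Ico, Finset.sum_eq_sum_Ico_succ_bot (by omega)]
    norm_num
  have h1 : ∀ k : ℕ, ((k:ℚ)/b - 1/2)^2 = (k:ℚ)^2 * (1/(b:ℚ)^2) - (k:ℚ) * (1/b) + 1/4 := by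
    intro k; field_simp; ring
  have h2 : ∑ k ∈ Finset.range b, ((k:ℚ)/b - 1/2)^2
      = (∑ k ∈ Finset.range b, (k:ℚ)^2) * (1/(b:ℚ)^2)
        - (∑ k ∈ Finset.range b, (k:ℚ)) * (1/b) + (b:ℚ) * (1/4) := by
    simp_rw [h1]
    rw [Finset.sum_add_distrib, Finset.sum_sub_distrib, ← Finset.sum_mul, ← Finset.sum_mul,
      Finset.sum_const, Finset.card_range]
    ring
  rw [sum_sq_range, sum_id_range] at h2
  have h3 : ∑ k ∈ Finset.Ico 1 b, ((k:ℚ)/b - 1/2)^2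
      = (b:ℚ)*((b:ℚ)-1)*(2*(b:ℚ)-1)/6 * (1/(b:ℚ)^2) - (b:ℚ)*((b:ℚ)-1)/2 * (1/b) + (b:ℚ) * (1/4) - 1/4 := by
    rw [h2, show ((0:ℚ)/b - 1/2)^2 = 1/4 by norm_num] at h0; linarith [h0]
  rw [h3]
  field_simp
  ring

lemma mod_mem (a b : ℕ) (hb : 2 ≤ b) (h : Nat.Coprime a b) {k : ℕ}
    (hk : k ∈ Finset.Ico 1 b) : k * a % b ∈ Finset.Ico 1 b := by
  rw [Finset.mem_Ico] at hk ⊢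
  constructor
  · rcases Nat.eq_zero_or_pos (k * a % b) with h0 | h0
    · exfalso
      have hd : b ∣ k * a := Nat.dvd_of_mod_eq_zero h0
      have : b ∣ k := (Nat.Coprime.dvd_of_dvd_mul_right (h.symm)) hd
      exact absurd (Nat.le_of_dvd (by omega) this) (by omega)
    · omega
  · exact Nat.mod_lt _ (by omega)

lemma image_mod (a b : ℕ) (hb : 2 ≤ b) (h : Nat.Coprime a b) :
    (Finset.Ico 1 b).image (fun k => k * a % b) = Finset.Ico 1 b := by
  have hinj : Set.InjOn (fun k => k * a % b) (Finset.Ico 1 b) := by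
    intro x hx y hy hxy
    simp only [Finset.coe_Ico, Set.mem_Ico] at hx hy
    have hme : x * a ≡ y * a [MOD b] := hxy
    have := hme.cancel_right_of_coprime h.symm
    have hx' := Nat.mod_eq_of_lt hx.2
    have hy' := Nat.mod_eq_of_lt hy.2
    unfold Nat.ModEq at this
    omega
  apply Finset.eq_of_subset_of_card_le
  · intro j hj
    rw [Finset.mem_image] at hj
    obtain ⟨k, hk, rfl⟩ := hj
    exact mod_mem a b hb h hk
  · rw [Finset.card_image_of_injOn hinj]

def auxF (b : ℕ) (k : ℕ) : ℚ := (k:ℚ)/b - 1/2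
def auxG (a b : ℕ) (k : ℕ) : ℚ := ((k * a % b : ℕ):ℚ)/b - 1/2

lemma dedekind_eq (a b : ℕ) (ha : 0 < a) (hb : 2 ≤ b) (h : Nat.Coprime a b) :
    dedekindSum a b = ∑ k ∈ Finset.Ico 1 b, auxF b k * auxG a b k := by
  unfold dedekindSum
  apply Finset.sum_congr rfl
  intro k hk
  have hk' := hk
  rw [Finset.mem_Ico] at hk'
  have hb0 : 0 < b := by omega
  have h1 : saw ((k:ℚ)/b) = auxF b k := by
    rw [saw_div k b hb0 (by rw [Nat.mod_eq_of_lt hk'.2]; omega), auxF,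
      Nat.mod_eq_of_lt hk'.2]
  have hmm := mod_mem a b hb h hk
  rw [Finset.mem_Ico] at hmm
  have h2 : saw (((k:ℚ) * a)/b) = auxG a b k := by
    have hc : ((k:ℚ) * a) = ((k*a : ℕ):ℚ) := by push_cast; ring
    rw [hc, saw_div (k*a) b hb0 (by omega), auxG]
  rw [h1, h2]

lemma sumG_eq_sumF (a b : ℕ) (hb : 2 ≤ b) (h : Nat.Coprime a b) :
    ∑ k ∈ Finset.Ico 1 b, auxG a b k ^ 2 = ∑ k ∈ Finset.Ico 1 b, auxF b k ^ 2 := by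
  have hinj : Set.InjOn (fun k => k * a % b) (Finset.Ico 1 b) := by
    intro x hx y hy hxy
    simp only [Finset.coe_Ico, Set.mem_Ico] at hx hy
    have hme : x * a ≡ y * a [MOD b] := hxy
    have := hme.cancel_right_of_coprime h.symm
    have hx' := Nat.mod_eq_of_lt hx.2
    have hy' := Nat.mod_eq_of_lt hy.2
    unfold Nat.ModEq at this
    omega
  calc ∑ k ∈ Finset.Ico 1 b, auxG a b k ^ 2
      = ∑ k ∈ Finset.Ico 1 b, auxF b (k * a % b) ^ 2 := rfl
    _ = ∑ j ∈ (Finset.Ico 1 b).image (fun k => k * a % b), auxF b j ^ 2 :=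
        by rw [Finset.sum_image (fun x hx y hy hxy => hinj (by simpa using hx) (by simpa using hy) hxy)]
    _ = ∑ j ∈ Finset.Ico 1 b, auxF b j ^ 2 := by rw [image_mod a b hb h]

lemma cond_upper (a b : ℕ) (ha : 0 < a) (hb : 2 ≤ b) (h : Nat.Coprime a b) :
    (∀ k ∈ Finset.Ico 1 b, auxF b k = auxG a b k) ↔ a ≡ 1 [MOD b] := by
  have hbQ : (b:ℚ) ≠ 0 := by positivity
  constructor
  · intro hall
    have h1 := hall 1 (Finset.mem_Ico.2 ⟨le_refl 1, by omega⟩)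
    rw [auxF, auxG] at h1
    have h3 : a % b = 1 := by
      field_simp at h1
      have h1' : ((1 * a % b : ℕ):ℚ) = 1 := by linarith [h1, (Nat.cast_one : ((1:ℕ):ℚ) = 1)]
      have h1'' : 1 * a % b = 1 := by exact_mod_cast h1'
      simpa using h1''
    show a % b = 1 % b
    rw [Nat.mod_eq_of_lt (by omega : 1 < b), h3]
  · intro hmod k hk
    rw [Finset.mem_Ico] at hk
    have hme : k * a ≡ k * 1 [MOD b] := hmod.mul_left k
    have hm : k * a % b = k := by
      unfold Nat.ModEq at hme
      rw [mul_one, Nat.mod_eq_of_lt hk.2] at hme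
      exact hme
    rw [auxF, auxG, hm]

lemma cond_lower (a b : ℕ) (ha : 0 < a) (hb : 2 ≤ b) (h : Nat.Coprime a b) :
    (∀ k ∈ Finset.Ico 1 b, auxF b k = -auxG a b k) ↔ (b : ℤ) ∣ (a : ℤ) + 1 := by
  have hbQ : (b:ℚ) ≠ 0 := by positivity
  constructor
  · intro hall
    have h1 := hall 1 (Finset.mem_Ico.2 ⟨le_refl 1, by omega⟩)
    rw [auxF, auxG] at h1
    have h2 : ((1 * a % b : ℕ):ℚ) = ((b - 1 : ℕ):ℚ) := by
      have hc : ((b - 1 : ℕ):ℚ) = (b:ℚ) - 1 := by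
        push_cast [Nat.cast_sub (by omega : 1 ≤ b)]; ring
      rw [hc]
      field_simp at h1 ⊢
      linarith [h1, (Nat.cast_one : ((1:ℕ):ℚ) = 1)]
    have h3 : a % b = b - 1 := by
      have h2' : 1 * a % b = b - 1 := by exact_mod_cast h2
      simpa using h2'
    have hdm := Nat.div_add_mod a b
    have h4 : b ∣ a + 1 := ⟨a / b + 1, by rw [Nat.mul_add, mul_one]; omega⟩
    exact_mod_cast Int.natCast_dvd_natCast.2 h4
  · intro hdvd k hk
    rw [Finset.mem_Ico] at hk
    have hmod : k * a % b = b - k := by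
      have h1 : k * a ≡ b - k [MOD b] := by
        rw [Nat.modEq_iff_dvd]
        have hc : ((b - k : ℕ):ℤ) = (b:ℤ) - k := by omega
        rw [hc]
        obtain ⟨t, ht⟩ := hdvd
        refine ⟨1 - k * t, ?_⟩
        have hat : (a:ℤ) = (b:ℤ) * t - 1 := by linarith
        push_cast
        rw [hat]; ring
      unfold Nat.ModEq at h1
      rw [Nat.mod_eq_of_lt (by omega : b - k < b)] at h1
      exact h1
    rw [auxF, auxG, hmod]
    have hc : ((b - k : ℕ):ℚ) = (b:ℚ) - k := by
      push_cast [Nat.cast_sub hk.2.le]; ring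
    rw [hc]
    field_simp
    ring

/-- `−(b−1)(b−2)/(12b) ≤ s(a,b) ≤ (b−1)(b−2)/(12b)`, with equality criteria. -/
theorem stmt15 (a b : ℕ) (ha : 0 < a) (hb : 2 ≤ b) (h : Nat.Coprime a b) :
    (-(((b : ℚ) - 1) * (b - 2) / (12 * b)) ≤ dedekindSum a b ∧
      dedekindSum a b ≤ ((b : ℚ) - 1) * (b - 2) / (12 * b)) ∧
    (dedekindSum a b = ((b : ℚ) - 1) * (b - 2) / (12 * b) ↔ a ≡ 1 [MOD b]) ∧
    (dedekindSum a b = -(((b : ℚ) - 1) * (b - 2) / (12 * b)) ↔ (b : ℤ) ∣ (a : ℤ) + 1) := by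
  have hD := dedekind_eq a b ha hb h
  have hGG := sumG_eq_sumF a b hb h
  have hSval := S1_val b hb
  set I := Finset.Ico 1 b with hI
  set S : ℚ := ∑ k ∈ I, auxF b k ^ 2 with hS
  have hSval' : ((b : ℚ) - 1) * ((b:ℚ) - 2) / (12 * b) = S := by
    rw [hS]; simp only [auxF]; exact hSval.symm
  have hup_id : ∑ k ∈ I, (auxF b k - auxG a b k)^2 = 2*S - 2*dedekindSum a b := by
    have he : ∀ k, (auxF b k - auxG a b k)^2
        = auxF b k^2 + auxG a b k^2 - 2*(auxF b k * auxG a b k) := fun k => by ring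
    simp_rw [he]
    rw [Finset.sum_sub_distrib, Finset.sum_add_distrib, ← Finset.mul_sum, hGG, hD]
    ring
  have hlo_id : ∑ k ∈ I, (auxF b k + auxG a b k)^2 = 2*S + 2*dedekindSum a b := by
    have he : ∀ k, (auxF b k + auxG a b k)^2
        = auxF b k^2 + auxG a b k^2 + 2*(auxF b k * auxG a b k) := fun k => by ring
    simp_rw [he]
    rw [Finset.sum_add_distrib, Finset.sum_add_distrib, ← Finset.mul_sum, hGG, hD]
    ring
  have hup_nn : (0:ℚ) ≤ ∑ k ∈ I, (auxF b k - auxG a b k)^2 :=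
    Finset.sum_nonneg (fun k _ => sq_nonneg _)
  have hlo_nn : (0:ℚ) ≤ ∑ k ∈ I, (auxF b k + auxG a b k)^2 :=
    Finset.sum_nonneg (fun k _ => sq_nonneg _)
  refine ⟨⟨by rw [hSval']; linarith, by rw [hSval']; linarith⟩, ?_, ?_⟩
  · rw [hSval', ← cond_upper a b ha hb h]
    constructor
    · intro he k hk
      have hz : ∑ k ∈ I, (auxF b k - auxG a b k)^2 = 0 := by rw [hup_id, he]; ring
      have := (Finset.sum_eq_zero_iff_of_nonneg (fun k _ => sq_nonneg _)).1 hz k hk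
      have h0 : auxF b k - auxG a b k = 0 := by
        exact pow_eq_zero_iff (two_ne_zero) |>.1 this
      linarith [h0]
    · intro hfg
      have : ∑ k ∈ I, auxF b k * auxG a b k = ∑ k ∈ I, auxF b k ^ 2 :=
        Finset.sum_congr rfl (fun k hk => by rw [← hfg k hk]; ring)
      rw [hD, this]
  · rw [hSval', ← cond_lower a b ha hb h]
    constructor
    · intro he k hk
      have hz : ∑ k ∈ I, (auxF b k + auxG a b k)^2 = 0 := by rw [hlo_id, he]; ring
      have := (Finset.sum_eq_zero_iff_of_nonneg (fun k _ => sq_nonneg _)).1 hz k hk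
      have h0 : auxF b k + auxG a b k = 0 := by
        exact pow_eq_zero_iff (two_ne_zero) |>.1 this
      linarith [h0]
    · intro hfg
      have : ∑ k ∈ I, auxF b k * auxG a b k = ∑ k ∈ I, -(auxF b k ^ 2) :=
        Finset.sum_congr rfl (fun k hk => by rw [hfg k hk]; ring)
      rw [hD, this, Finset.sum_neg_distrib]
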